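/- Let (X, d) be a metric space, p ∈ X, r > 0, and let ρ be a Borel probability measure supported in the closed ball of radius r around p. Then for any q in that closed ball, the 2-Wasserstein distance satisfies W₂(ρ, δ_q) ≥ (1/2) ∬ d(x,y) dρ(x) dρ(y), where the double integral is over the closed ball squared. -/

import Mathlib

open MeasureTheory

/-- The intrinsic 2-Wasserstein distance, defined via transport plans. -/
noncomputable def W2 {X : Type*} [MetricSpace X] [MeasurableSpace X]
    (ρ σ : Measure X) : ℝ :=
  Real.sqrt (sInf {I : ℝ | ∃ γ : Measure (X × X),
    γ.map Prod.fst = ρ ∧ γ.map Prod.snd = σ ∧ I = ∫ p, dist p.1 p.2 ^ 2 ∂γ})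

/-- Key estimate in the proof of Theorem 3.3: for ρ supported in a closed ball and q
in that ball, W₂(ρ, δ_q) ≥ (1/2) ∬ d(x,y) dρ(x) dρ(y). -/
theorem wasserstein_ge_half_mean_distance {X : Type*} [MetricSpace X]
    [MeasurableSpace X] [BorelSpace X]
    (p : X) (r : ℝ) (hr : 0 < r)
    (ρ : Measure X) [IsProbabilityMeasure ρ]
    (hsupp : ρ (Metric.closedBall p r) = 1)
    (q : X) (hq : q ∈ Metric.closedBall p r) :
    W2 ρ (Measure.dirac q) ≥ (1 / 2) * ∫ x, ∫ y, dist x y ∂ρ ∂ρ := by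
  classical
  have hball : MeasurableSet (Metric.closedBall p r) := measurableSet_closedBall
  have hae : ∀ᵐ x ∂ρ, x ∈ Metric.closedBall p r := by
    rw [ae_iff]
    have hc : ρ (Metric.closedBall p r)ᶜ = 0 := by
      rw [measure_compl hball (measure_ne_top _ _), hsupp, measure_univ]
      simp
    simpa [Metric.closedBall, Set.compl_setOf, not_le] using hc
  set g : X → ℝ := fun x => dist x q with hg
  have hgc : Continuous g := continuous_id.dist continuous_const
  have hgnn : ∀ x, 0 ≤ g x := fun x => dist_nonneg
  have hgb : ∀ᵐ x ∂ρ, ‖g x‖ ≤ 2 * r := by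
    filter_upwards [hae] with x hx
    rw [Real.norm_of_nonneg (hgnn x)]
    calc g x ≤ dist x p + dist p q := dist_triangle ..
    _ ≤ r + r := add_le_add (by simpa [Metric.mem_closedBall] using hx)
        (by simpa [Metric.mem_closedBall, dist_comm] using hq)
    _ = 2 * r := by ring
  have hgint : Integrable g ρ :=
    Integrable.mono' (integrable_const (2 * r)) hgc.aestronglyMeasurable hgb
  set m : ℝ := ∫ x, g x ∂ρ with hm
  have hmnn : 0 ≤ m := integral_nonneg hgnn
  have hdouble : ∫ x, ∫ y, dist x y ∂ρ ∂ρ ≤ 2 * m := by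
    have hx : ∀ᵐ x ∂ρ, ∫ y, dist x y ∂ρ ≤ g x + m := by
      filter_upwards with x
      have h1 : ∀ᵐ y ∂ρ, dist x y ≤ g x + g y := by
        filter_upwards with y
        calc dist x y ≤ dist x q + dist q y := dist_triangle ..
        _ = g x + g y := by simp [hg, dist_comm]
      have h2 : ∫ y, dist x y ∂ρ ≤ ∫ y, (g x + g y) ∂ρ :=
        integral_mono_of_nonneg (Filter.Eventually.of_forall fun y => dist_nonneg)
          ((integrable_const (g x)).add hgint) h1
      simpa [integral_add (integrable_const (g x)) hgint] using h2
    calc ∫ x, ∫ y, dist x y ∂ρ ∂ρ ≤ ∫ x, (g x + m) ∂ρ :=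
          integral_mono_of_nonneg
            (Filter.Eventually.of_forall fun x => integral_nonneg fun y => dist_nonneg)
            (hgint.add (integrable_const m)) hx
      _ = m + m := by rw [integral_add hgint (integrable_const m)]; simp [hm]
      _ = 2 * m := by ring
  set S : Set ℝ := {I : ℝ | ∃ γ : Measure (X × X),
    γ.map Prod.fst = ρ ∧ γ.map Prod.snd = Measure.dirac q ∧
      I = ∫ pr, dist pr.1 pr.2 ^ 2 ∂γ} with hSdef
  have hne : S.Nonempty := by
    refine ⟨∫ pr, dist pr.1 pr.2 ^ 2 ∂(ρ.prod (Measure.dirac q)),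
      ρ.prod (Measure.dirac q), ?_, ?_, rfl⟩
    · exact Measure.fst_prod
    · exact Measure.snd_prod
  have hS : ∀ I ∈ S, m ^ 2 ≤ I := by
    rintro I ⟨γ, hγ1, hγ2, rfl⟩
    have hsndae : ∀ᵐ pr ∂γ, pr.2 = q := by
      rw [ae_iff]
      have hz : γ (Prod.snd ⁻¹' {q}ᶜ) = 0 := by
        rw [← Measure.map_apply measurable_snd (measurableSet_singleton q).compl, hγ2]
        simp
      simpa [Set.preimage] using hz
    have heq : (∫ pr, dist pr.1 pr.2 ^ 2 ∂γ) = ∫ pr, g pr.1 ^ 2 ∂γ := by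
      refine integral_congr_ae ?_
      filter_upwards [hsndae] with pr h
      rw [hg]
      simp [h]
    have heq2 : (∫ pr, g pr.1 ^ 2 ∂γ) = ∫ x, g x ^ 2 ∂ρ := by
      rw [← hγ1, integral_map measurable_fst.aemeasurable]
      exact (hgc.pow 2).aestronglyMeasurable
    have hmem : MemLp g 2 ρ := MemLp.of_bound hgc.aestronglyMeasurable (2 * r) hgb
    have hvar := ProbabilityTheory.variance_nonneg g ρ
    rw [ProbabilityTheory.variance_eq_sub hmem] at hvar
    have hCS : m ^ 2 ≤ ∫ x, g x ^ 2 ∂ρ := by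
      have : (∫ x, (g ^ 2) x ∂ρ) = ∫ x, g x ^ 2 ∂ρ := by
        simp [Pi.pow_apply]
      rw [this] at hvar
      rw [hm]
      linarith
    rw [heq, heq2]
    exact hCS
  have hinf : m ^ 2 ≤ sInf S := le_csInf hne hS
  have hsq : m ≤ Real.sqrt (sInf S) := by
    have h := Real.sqrt_le_sqrt hinf
    rwa [Real.sqrt_sq hmnn] at h
  unfold W2
  calc (1 / 2) * ∫ x, ∫ y, dist x y ∂ρ ∂ρ ≤ m := by linarith
  _ ≤ Real.sqrt (sInf S) := hsq
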